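/- Let a, b be strictly positive real numbers. Then the function s : ℝ → ℝ given by s(v) = a·4/(1 + exp(v))² + b·4/(1 + exp(−v))² attains its minimum over ℝ at v = ln(a/b), and the minimum value equals 4ab/(a+b); in particular, this minimum value coincides with the minimum over ℝ of the quadratic-loss objective v ↦ a·(1−v)² + b·(1+v)². (Proposition 3: the minimum partial empirical risk R̂*(S) is the same for the quadratic loss and the savage loss.) -/

import Mathlib

/-- Proposition 3: the savage-loss objective `s v = a*4/(1+exp v)^2 + b*4/(1+exp(-v))^2`
attains its minimum at `v = ln(a/b)`, with minimum value `4ab/(a+b)`; in particular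
this coincides with the minimum over ℝ of the quadratic-loss objective
`v ↦ a*(1-v)^2 + b*(1+v)^2`. -/
theorem savage_loss_min_eq_quad_min (a b : ℝ) (ha : 0 < a) (hb : 0 < b) :
    (∀ u : ℝ,
        a * 4 / (1 + Real.exp (Real.log (a / b))) ^ 2
            + b * 4 / (1 + Real.exp (-Real.log (a / b))) ^ 2 ≤
          a * 4 / (1 + Real.exp u) ^ 2 + b * 4 / (1 + Real.exp (-u)) ^ 2) ∧
    a * 4 / (1 + Real.exp (Real.log (a / b))) ^ 2
        + b * 4 / (1 + Real.exp (-Real.log (a / b))) ^ 2 = 4 * a * b / (a + b) ∧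
    ∃ v₀ : ℝ, (∀ u : ℝ, a * (1 - v₀) ^ 2 + b * (1 + v₀) ^ 2 ≤
          a * (1 - u) ^ 2 + b * (1 + u) ^ 2) ∧
      a * (1 - v₀) ^ 2 + b * (1 + v₀) ^ 2 = 4 * a * b / (a + b) := by
  have hab : 0 < a + b := by linarith
  have hdiv : 0 < a / b := div_pos ha hb
  have h1 : Real.exp (Real.log (a / b)) = a / b := Real.exp_log hdiv
  have h2 : Real.exp (-Real.log (a / b)) = b / a := by
    rw [Real.exp_neg, h1, inv_div]
  have hval : a * 4 / (1 + Real.exp (Real.log (a / b))) ^ 2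
      + b * 4 / (1 + Real.exp (-Real.log (a / b))) ^ 2 = 4 * a * b / (a + b) := by
    rw [h1, h2]
    field_simp
    ring
  have hqval : a * (1 - (a - b) / (a + b)) ^ 2 + b * (1 + (a - b) / (a + b)) ^ 2
      = 4 * a * b / (a + b) := by
    field_simp
    ring
  refine ⟨?_, hval, (a - b) / (a + b), ?_, hqval⟩
  · intro u
    rw [hval]
    set t := Real.exp u with ht
    have htpos : 0 < t := Real.exp_pos u
    have hneg : Real.exp (-u) = t⁻¹ := Real.exp_neg u
    rw [hneg]
    have h1t : (0:ℝ) < 1 + t := by linarith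
    have hrw : b * 4 / (1 + t⁻¹) ^ 2 = b * 4 * t ^ 2 / (1 + t) ^ 2 := by
      rw [div_eq_div_iff (by positivity) (by positivity)]
      field_simp
      ring
    rw [hrw, ← add_div, div_le_div_iff₀ hab (by positivity)]
    nlinarith [mul_nonneg (sq_nonneg (a - b * t)) htpos.le, sq_nonneg (a - b * t)]
  · intro u
    rw [hqval, div_le_iff₀ hab]
    nlinarith [sq_nonneg (u * (a + b) - (a - b))]
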